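/- For all λ ∈ (0,1), k ∈ (0,1), every integer N ≥ 1, and β = (1−λ²)/(1−k²), if the tail T := ∑_{n=N}^∞ (1−k²)^{n+1} [ (1/2)∫₀^β t^n/√(t(1+t)) dt + (k²/2)∫₀^β t^{n+1/2}/√(1+t) dt ], then T ≤ ((1−λ²)^{N+1}(λ² + β + 1/N)) / (2(N+1)λ²√(β(1+β))). -/

import Mathlib

open Real intervalIntegral MeasureTheory Set

lemma lemA (n : ℕ) (hn : 1 ≤ n) (β : ℝ) (hβ : 0 < β) :
    ∫ t in (0:ℝ)..β, t ^ n / Real.sqrt (t * (1 + t)) ≤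
      β ^ (n + 1) / (n * Real.sqrt (β * (1 + β))) := by
  have hn' : (1:ℝ) ≤ n := by exact_mod_cast hn
  have hnpos : (0:ℝ) < n := by linarith
  have hn0 : (n:ℝ) ≠ 0 := hnpos.ne'
  set p : ℝ := (n : ℝ) with hp
  set F : ℝ → ℝ := fun t => (1/(n:ℝ)) * t ^ (p + 1/2) * (1+t) ^ (-(1/2) : ℝ) with hF
  set h : ℝ → ℝ := fun t => (1/(n:ℝ)) * ((p + 1/2) * t ^ (p - 1/2) * (1+t) ^ (-(1/2):ℝ)
      + t ^ (p + 1/2) * (-(1/2) * (1+t) ^ (-(3/2):ℝ))) with hh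
  have hne1 : p - 1/2 ≠ 0 := by
    have : (0:ℝ) < p - 1/2 := by linarith
    exact this.ne'
  have hne2 : p + 1/2 ≠ 0 := by
    have : (0:ℝ) < p + 1/2 := by linarith
    exact this.ne'
  have huIcc : Set.uIcc (0:ℝ) β = Set.Icc 0 β := Set.uIcc_of_le hβ.le
  -- HasDerivAt
  have hderiv : ∀ t ∈ Set.uIcc (0:ℝ) β, HasDerivAt F (h t) t := by
    intro t ht
    rw [huIcc] at ht
    have ht0 : (0:ℝ) ≤ t := ht.1
    have h1t : (0:ℝ) < 1 + t := by linarith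
    have d1 : HasDerivAt (fun x : ℝ => x ^ (p + 1/2)) ((p+1/2) * t ^ (p - 1/2)) t := by
      have h0 := Real.hasDerivAt_rpow_const (x := t) (p := p + 1/2) (Or.inr (by linarith))
      rw [show p - (1/2:ℝ) = p + 1/2 - 1 by ring]
      exact h0
    have d2 : HasDerivAt (fun x : ℝ => (1+x) ^ (-(1/2):ℝ)) (-(1/2) * (1+t) ^ (-(3/2):ℝ)) t := by
      have h0 := (Real.hasDerivAt_rpow_const (x := 1+t) (p := -(1/2))
        (Or.inl h1t.ne')).comp t ((hasDerivAt_id t).const_add 1)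
      rw [show (-(3/2):ℝ) = -(1/2)-1 by norm_num, ← mul_one (-(1/2) * (1+t) ^ (-(1/2)-1 : ℝ))]
      exact h0
    have h3 := ((d1.const_mul (1/(n:ℝ))).mul d2)
    refine h3.congr_deriv ?_
    simp only [hh]
    ring
  -- integrability of h
  have c1 : Continuous fun t : ℝ => t ^ (p - 1/2) := by
    rw [continuous_iff_continuousAt]
    intro x
    exact Real.continuousAt_rpow_const x _ (Or.inr (by linarith))
  have c2 : Continuous fun t : ℝ => t ^ (p + 1/2) := by
    rw [continuous_iff_continuousAt]
    intro x
    exact Real.continuousAt_rpow_const x _ (Or.inr (by linarith))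
  have c3 : ∀ q : ℝ, ContinuousOn (fun t : ℝ => (1+t) ^ q) (Set.Icc (0:ℝ) β) := by
    intro q x hx
    have h1x : (0:ℝ) < 1 + x := by have := hx.1; linarith
    exact ((Real.continuousAt_rpow_const (1+x) q (Or.inl h1x.ne')).comp
      ((continuous_const.add continuous_id).continuousAt)).continuousWithinAt
  have hcont : ContinuousOn h (Set.uIcc (0:ℝ) β) := by
    rw [hh, huIcc]
    apply ContinuousOn.mul continuousOn_const
    apply ContinuousOn.add
    · exact ((continuousOn_const.mul c1.continuousOn).mul (c3 _))
    · exact c2.continuousOn.mul (continuousOn_const.mul (c3 _))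
  have hint : IntervalIntegrable h volume 0 β := hcont.intervalIntegrable
  -- pointwise bound
  have hbound : ∀ t ∈ Set.Icc (0:ℝ) β, t ^ n / Real.sqrt (t * (1 + t)) ≤ h t := by
    intro t ht
    have ht0 : (0:ℝ) ≤ t := ht.1
    have h1t : (0:ℝ) < 1 + t := by linarith
    rcases eq_or_lt_of_le ht0 with rfl | htpos
    · have lhs0 : (0:ℝ) ^ n / Real.sqrt (0 * (1 + 0)) = 0 := by simp
      rw [lhs0, hh]
      show (0:ℝ) ≤ (1/(n:ℝ)) * ((p + 1/2) * (0:ℝ) ^ (p - 1/2) * (1+0) ^ (-(1/2):ℝ)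
        + (0:ℝ) ^ (p + 1/2) * (-(1/2) * (1+0) ^ (-(3/2):ℝ)))
      rw [Real.zero_rpow hne1, Real.zero_rpow hne2]
      norm_num
    · set A : ℝ := t ^ (p - 1/2) with hA
      set C : ℝ := (1+t) ^ (-(3/2):ℝ) with hC
      have hApos : 0 < A := Real.rpow_pos_of_pos htpos _
      have hCpos : 0 < C := Real.rpow_pos_of_pos h1t _
      have eB : (1+t) ^ (-(1/2):ℝ) = (1+t) * C := by
        rw [hC, show (-(1/2):ℝ) = 1 + -(3/2) by norm_num, Real.rpow_add h1t, Real.rpow_one]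
      have ePA : t ^ (p + 1/2) = t * A := by
        rw [hA, show p + 1/2 = 1 + (p - 1/2) by ring, Real.rpow_add htpos, Real.rpow_one]
      have hinv : ((1+t:ℝ) ^ (1/2:ℝ))⁻¹ * (1+t) ^ (1/2:ℝ) = 1 :=
        inv_mul_cancel₀ (Real.rpow_pos_of_pos h1t _).ne'
      have eg : t ^ n / Real.sqrt (t * (1 + t)) = A * ((1+t) * C) := by
        rw [← eB, Real.rpow_neg h1t.le, Real.sqrt_mul ht0, Real.sqrt_eq_rpow,
          Real.sqrt_eq_rpow, ← Real.rpow_natCast t n, ← hp,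
          div_eq_iff (by positivity : t ^ (1/2:ℝ) * (1+t) ^ (1/2:ℝ) ≠ 0), hA]
        rw [show t ^ (p-(1/2:ℝ)) * ((1+t) ^ (1/2:ℝ))⁻¹ * (t ^ (1/2:ℝ) * (1+t) ^ (1/2:ℝ))
            = (t ^ (p-(1/2:ℝ)) * t ^ (1/2:ℝ)) * (((1+t) ^ (1/2:ℝ))⁻¹ * (1+t) ^ (1/2:ℝ)) by ring,
          hinv, mul_one, ← Real.rpow_add htpos]
        norm_num
      rw [eg]
      simp only [hh]
      rw [eB, ePA, ← hA, ← hC]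
      have key : (1/(n:ℝ)) * ((p + 1/2) * A * ((1+t) * C) + t * A * (-(1/2) * C))
          - A * ((1+t) * C) = A * C * (1 / (2*(n:ℝ))) := by
        rw [hp]
        field_simp
        ring
      have hac : 0 ≤ A * C * (1 / (2*(n:ℝ))) :=
        mul_nonneg (mul_nonneg hApos.le hCpos.le) (by positivity)
      linarith [key, hac]
  -- integrability of g
  have hgmeas : AEStronglyMeasurable (fun t : ℝ => t ^ n / Real.sqrt (t * (1 + t)))
      (volume.restrict (Set.uIoc (0:ℝ) β)) := by
    apply Measurable.aestronglyMeasurable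
    exact (measurable_id.pow_const n).div
      (Real.continuous_sqrt.measurable.comp (measurable_id.mul (measurable_const.add measurable_id)))
  have hgint : IntervalIntegrable (fun t : ℝ => t ^ n / Real.sqrt (t * (1 + t))) volume 0 β := by
    apply hint.mono_fun hgmeas
    filter_upwards [MeasureTheory.ae_restrict_mem measurableSet_uIoc] with t ht
    rw [Set.uIoc_of_le hβ.le] at ht
    have htmem : t ∈ Set.Icc (0:ℝ) β := ⟨ht.1.le, ht.2⟩
    have hg0 : 0 ≤ t ^ n / Real.sqrt (t * (1 + t)) :=
      div_nonneg (pow_nonneg ht.1.le n) (Real.sqrt_nonneg _)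
    rw [Real.norm_of_nonneg hg0, Real.norm_of_nonneg (le_trans hg0 (hbound t htmem))]
    exact hbound t htmem
  -- combine
  have step1 : ∫ t in (0:ℝ)..β, t ^ n / Real.sqrt (t * (1 + t)) ≤ ∫ t in (0:ℝ)..β, h t :=
    intervalIntegral.integral_mono_on hβ.le hgint hint hbound
  have step2 : ∫ t in (0:ℝ)..β, h t = F β - F 0 :=
    intervalIntegral.integral_eq_sub_of_hasDerivAt hderiv hint
  have hF0 : F 0 = 0 := by
    rw [hF]
    show (1/(n:ℝ)) * (0:ℝ) ^ (p + 1/2) * (1+0) ^ (-(1/2):ℝ) = 0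
    rw [Real.zero_rpow hne2]
    ring
  have hFβ : F β = β ^ (n + 1) / (n * Real.sqrt (β * (1 + β))) := by
    have h1β : (0:ℝ) < 1 + β := by linarith
    have hane : (β:ℝ) ^ (1/2:ℝ) ≠ 0 := (Real.rpow_pos_of_pos hβ _).ne'
    have hbne : ((1+β):ℝ) ^ (1/2:ℝ) ≠ 0 := (Real.rpow_pos_of_pos h1β _).ne'
    simp only [hF]
    rw [Real.sqrt_mul hβ.le, Real.sqrt_eq_rpow, Real.sqrt_eq_rpow,
      ← Real.rpow_natCast β (n+1), Real.rpow_neg h1β.le]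
    push_cast
    rw [show (n:ℝ) + 1 = (p + 1/2) + (1/2) by rw [hp]; ring, Real.rpow_add hβ]
    have hsq : (β ^ (1/2:ℝ))^2 = β := by
      rw [sq, ← Real.rpow_add hβ]; norm_num
    have h1n : β ^ ((1:ℝ) + (n:ℝ)) = β * β ^ p := by
      rw [Real.rpow_add hβ, Real.rpow_one, hp]
    field_simp
    rw [show ((2 * p + 1 + 1)/2 : ℝ) = 1 + p by ring, Real.rpow_add hβ, Real.rpow_one]
    linear_combination (β ^ p) * hsq
  rw [step2, hF0, hFβ] at step1
  linarith [step1]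

lemma lemB (n : ℕ) (β : ℝ) (hβ : 0 < β) :
    ∫ t in (0:ℝ)..β, t ^ ((n:ℝ) + 1/2) / Real.sqrt (1 + t) ≤
      β ^ (n + 2) / (((n:ℝ) + 1) * Real.sqrt (β * (1 + β))) := by
  have hcongr : Set.EqOn (fun t : ℝ => t ^ ((n:ℝ) + 1/2) / Real.sqrt (1 + t))
      (fun t : ℝ => t ^ (n+1) / Real.sqrt (t * (1 + t))) (Set.uIcc 0 β) := by
    intro t ht
    rw [Set.uIcc_of_le hβ.le] at ht
    have ht0 : (0:ℝ) ≤ t := ht.1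
    have h1t : (0:ℝ) < 1 + t := by linarith
    rcases eq_or_lt_of_le ht0 with rfl | htpos
    · have hzz : ((n:ℝ) + 1/2) ≠ 0 := by positivity
      show (0:ℝ) ^ ((n:ℝ)+1/2) / Real.sqrt (1+0) = (0:ℝ)^(n+1)/Real.sqrt (0*(1+0))
      rw [Real.zero_rpow hzz]
      simp
    · have hs1 : Real.sqrt (1+t) ≠ 0 := by positivity
      have hs2 : t ^ (1/2:ℝ) ≠ 0 := (Real.rpow_pos_of_pos htpos _).ne'
      simp only
      rw [Real.sqrt_mul ht0, ← Real.rpow_natCast t (n+1),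
        show (((n+1:ℕ)):ℝ) = ((n:ℝ) + 1/2) + (1/2) by push_cast; ring,
        Real.rpow_add htpos, Real.sqrt_eq_rpow t]
      have hsq : t^(1/2:ℝ)*t^(1/2:ℝ) = t := by rw [← Real.rpow_add htpos]; norm_num
      field_simp
      rw [show (2*(n:ℝ)+1+1)/2 = (n:ℝ)+1 by ring, Real.rpow_add htpos, Real.rpow_one,
        Real.rpow_natCast]
      linear_combination (t^n) * hsq
  rw [intervalIntegral.integral_congr hcongr]
  calc ∫ t in (0:ℝ)..β, t ^ (n+1) / Real.sqrt (t * (1 + t))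
      ≤ β ^ (n+1+1) / ((n+1 : ℕ) * Real.sqrt (β * (1 + β))) :=
        lemA (n+1) (Nat.le_add_left 1 n) β hβ
    _ = β ^ (n + 2) / (((n:ℝ) + 1) * Real.sqrt (β * (1 + β))) := by
        push_cast
        ring_nf

theorem tail_bound_second (lam k : ℝ) (hlam : lam ∈ Set.Ioo (0:ℝ) 1)
    (hk : k ∈ Set.Ioo (0:ℝ) 1) (N : ℕ) (hN : 1 ≤ N)
    (beta : ℝ) (hbeta : beta = (1 - lam ^ 2) / (1 - k ^ 2)) :
    (∑' m : ℕ, (1 - k ^ 2) ^ (N + m + 1) *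
        ((1/2) * (∫ t in (0:ℝ)..beta, t ^ (N + m) / Real.sqrt (t * (1 + t))) +
          (k ^ 2 / 2) * ∫ t in (0:ℝ)..beta, t ^ ((N + m : ℕ) + 1/2 : ℝ) / Real.sqrt (1 + t))) ≤
      (1 - lam ^ 2) ^ (N + 1) * (lam ^ 2 + beta + 1 / N) /
        (2 * (N + 1) * lam ^ 2 * Real.sqrt (beta * (1 + beta))) := by
  obtain ⟨hlam0, hlam1⟩ := hlam
  obtain ⟨hk0, hk1⟩ := hk
  have hc : 0 < 1 - k^2 := by nlinarith
  have hr0 : 0 < 1 - lam^2 := by nlinarith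
  have hr1 : 1 - lam^2 < 1 := by nlinarith
  have hbpos : 0 < beta := by rw [hbeta]; positivity
  have hS : 0 < Real.sqrt (beta*(1+beta)) := Real.sqrt_pos.mpr (by positivity)
  have hcb : (1-k^2) * beta = 1 - lam^2 := by rw [hbeta]; field_simp
  set s : ℝ := Real.sqrt (beta*(1+beta)) with hs
  have hs0 : s ≠ 0 := hS.ne'
  have hq : k^2*beta = beta - 1 + lam^2 := by linear_combination -hcb
  have hNpos : (0:ℝ) < N := by exact_mod_cast Nat.pos_of_ne_zero (by omega)
  set E : ℝ := (1-lam^2)^(N+1) * (k^2*beta + 1 + 1/(N:ℝ)) /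
    (2*((N:ℝ)+1)*s) with hE
  set f : ℕ → ℝ := fun m => (1 - k ^ 2) ^ (N + m + 1) *
        ((1/2) * (∫ t in (0:ℝ)..beta, t ^ (N + m) / Real.sqrt (t * (1 + t))) +
          (k ^ 2 / 2) * ∫ t in (0:ℝ)..beta, t ^ ((N + m : ℕ) + 1/2 : ℝ) / Real.sqrt (1 + t))
    with hf
  have key : ∀ m : ℕ, f m ≤ E * (1-lam^2)^m := by
    intro m
    have hI1 := lemA (N+m) (le_trans hN (Nat.le_add_right N m)) beta hbpos
    have hI2 := lemB (N+m) beta hbpos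
    have hNm : (0:ℝ) < ((N+m : ℕ):ℝ) := by
      have : (0:ℕ) < N + m := by omega
      exact_mod_cast this
    have step1 : f m ≤ (1 - k^2)^(N+m+1) *
        ((1/2) * (beta ^ (N+m+1) / (((N+m:ℕ):ℝ) * s)) +
         (k^2/2) * (beta ^ (N+m+2) / ((((N+m:ℕ):ℝ) + 1) * s))) := by
      rw [hf]
      apply mul_le_mul_of_nonneg_left _ (by positivity)
      apply add_le_add
      · exact mul_le_mul_of_nonneg_left hI1 (by norm_num)
      · exact mul_le_mul_of_nonneg_left hI2 (by positivity)
    have step2 : (1 - k^2)^(N+m+1) *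
        ((1/2) * (beta ^ (N+m+1) / (((N+m:ℕ):ℝ) * s)) +
         (k^2/2) * (beta ^ (N+m+2) / ((((N+m:ℕ):ℝ) + 1) * s))) ≤
        (1 - k^2)^(N+m+1) *
        ((1/2) * (beta ^ (N+m+1) / (((N:ℕ):ℝ) * s)) +
         (k^2/2) * (beta ^ (N+m+2) / ((((N:ℕ):ℝ) + 1) * s))) := by
      have hcast : ((N:ℕ):ℝ) ≤ ((N+m:ℕ):ℝ) := by exact_mod_cast Nat.le_add_right N m
      gcongr
    have step3 : (1 - k^2)^(N+m+1) *
        ((1/2) * (beta ^ (N+m+1) / (((N:ℕ):ℝ) * s)) +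
         (k^2/2) * (beta ^ (N+m+2) / ((((N:ℕ):ℝ) + 1) * s))) =
        E * (1-lam^2)^m := by
      have epow : (1-k^2)^(N+m+1) * beta^(N+m+1) = (1-lam^2)^(N+1) * (1-lam^2)^m := by
        rw [← mul_pow, hcb, ← pow_add]
        congr 1
        omega
      have ebsucc : beta ^ (N+m+2) = beta ^ (N+m+1) * beta := by ring
      have lhs_eq : (1 - k^2)^(N+m+1) *
          ((1/2) * (beta ^ (N+m+1) / (((N:ℕ):ℝ) * s)) +
           (k^2/2) * (beta ^ (N+m+2) / ((((N:ℕ):ℝ) + 1) * s))) =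
          ((1-k^2)^(N+m+1) * beta^(N+m+1)) *
            (1/(2*(N:ℝ)*s) + k^2*beta/(2*((N:ℝ)+1)*s)) := by
        rw [ebsucc]
        field_simp
      rw [lhs_eq, epow, hE]
      field_simp
      ring
    calc f m ≤ _ := step1
      _ ≤ _ := step2
      _ = E * (1-lam^2)^m := step3
  have hfnonneg : ∀ m : ℕ, 0 ≤ f m := by
    intro m
    rw [hf]
    apply mul_nonneg (by positivity)
    apply add_nonneg
    · apply mul_nonneg (by norm_num)
      apply intervalIntegral.integral_nonneg hbpos.le
      intro t ht
      exact div_nonneg (pow_nonneg ht.1 _) (Real.sqrt_nonneg _)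
    · apply mul_nonneg (by positivity)
      apply intervalIntegral.integral_nonneg hbpos.le
      intro t ht
      exact div_nonneg (Real.rpow_nonneg ht.1 _) (Real.sqrt_nonneg _)
  have hsumb : Summable (fun m : ℕ => E * (1-lam^2)^m) :=
    (summable_geometric_of_lt_one hr0.le hr1).mul_left E
  have hsuma : Summable f := Summable.of_nonneg_of_le hfnonneg key hsumb
  have hle := Summable.tsum_le_tsum key hsuma hsumb
  have hgeo : (∑' m : ℕ, E * (1-lam^2)^m) = E * (lam^2)⁻¹ := by
    rw [tsum_mul_left, tsum_geometric_of_lt_one hr0.le hr1]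
    congr 1
    ring_nf
  rw [hgeo] at hle
  refine le_trans hle (le_of_eq ?_)
  rw [hE, show lam^2 + beta + 1/(N:ℝ) = k^2*beta + 1 + 1/(N:ℝ) by linarith]
  have hlam2 : lam^2 ≠ 0 := by positivity
  field_simp
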